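/- Let T > 0 and let h : [0,T] × ℝ → ℝ be an L¹-Carathéodory function with h(x,0) = 0 for a.e. x ∈ [0,T]. Assume there exists a non-negative q ∈ L¹([0,T]) such that limsup_{s→0⁺} |h(x,s)|/s ≤ q(x) uniformly for a.e. x ∈ [0,T], meaning: for every ε > 0 there exists δ > 0 such that |h(x,s)| ≤ (q(x) + ε) s for a.e. x ∈ [0,T] and every s with 0 < s ≤ δ. Then every solution u of u'' + h(x,u) = 0 on [0,T] satisfying either the Neumann boundary conditions or the periodic boundary conditions, with u(x) ≥ 0 for all x ∈ [0,T] and u not identically zero, satisfies u(x) > 0 for every x ∈ [0,T]. -/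

import Mathlib

open MeasureTheory Set Filter

/-- `u` (with derivative `u'`) is a C¹ solution of `u'' + f(x) = 0` on `[0,T]`:
`u'` is absolutely continuous and the equation holds a.e., expressed via the
integral equation `u'(x) = u'(0) − ∫₀ˣ f(t) dt`. -/
def IsSolOn (T : ℝ) (f : ℝ → ℝ) (u u' : ℝ → ℝ) : Prop :=
  (∀ x ∈ Icc (0:ℝ) T, HasDerivWithinAt u (u' x) (Icc (0:ℝ) T) x) ∧
  ContinuousOn u' (Icc (0:ℝ) T) ∧
  ∀ x ∈ Icc (0:ℝ) T, u' x = u' 0 - ∫ t in (0:ℝ)..x, f t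

/-- The equation `u'' + a(x) g(u) = 0` on `[0,T]` has a positive solution
satisfying the Neumann boundary conditions. -/
def PosSolNeumann (T : ℝ) (a g : ℝ → ℝ) : Prop :=
  ∃ u u' : ℝ → ℝ, IsSolOn T (fun t => a t * g (u t)) u u' ∧
    (∀ x ∈ Icc (0:ℝ) T, 0 < u x) ∧ u' 0 = 0 ∧ u' T = 0

/-- The equation `u'' + a(x) g(u) = 0` on `[0,T]` has a positive solution
satisfying the periodic boundary conditions. -/
def PosSolPeriodic (T : ℝ) (a g : ℝ → ℝ) : Prop :=
  ∃ u u' : ℝ → ℝ, IsSolOn T (fun t => a t * g (u t)) u u' ∧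
    (∀ x ∈ Icc (0:ℝ) T, 0 < u x) ∧ u 0 = u T ∧ u' 0 = u' T

/-- `h : [0,T] × ℝ → ℝ` is an `L¹`-Carathéodory function. -/
def L1Caratheodory (T : ℝ) (h : ℝ → ℝ → ℝ) : Prop :=
  (∀ s : ℝ, Measurable fun x => h x s) ∧
  (∀ᵐ x ∂(volume.restrict (Icc (0:ℝ) T)), Continuous fun s => h x s) ∧
  ∀ ρ : ℝ, 0 < ρ → ∃ γ : ℝ → ℝ, (∀ x, 0 ≤ γ x) ∧
    IntegrableOn γ (Icc (0:ℝ) T) volume ∧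
    ∀ᵐ x ∂(volume.restrict (Icc (0:ℝ) T)), ∀ s : ℝ, |s| ≤ ρ → |h x s| ≤ γ x


open Topology
open scoped Interval

lemma local_zero (T : ℝ) (u u' f M : ℝ → ℝ) (δ : ℝ) (hδ : 0 < δ)
    (hu : ContinuousOn u (Icc 0 T))
    (hderiv : ∀ x ∈ Ioo (0:ℝ) T, HasDerivAt u (u' x) x)
    (heq : ∀ x ∈ Icc (0:ℝ) T, u' x = u' 0 - ∫ t in (0:ℝ)..x, f t)
    (hu'cont : ContinuousOn u' (Icc 0 T))
    (hfint : IntegrableOn f (Icc 0 T))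
    (hM0 : ∀ x, 0 ≤ M x) (hMint : IntegrableOn M (Icc 0 T))
    (hMuint : IntegrableOn (fun t => M t * u t) (Icc 0 T))
    (hbound : ∀ᵐ t ∂(volume.restrict (Icc (0:ℝ) T)),
      0 ≤ u t → u t ≤ δ → |f t| ≤ M t * u t)
    (hnn : ∀ x ∈ Icc (0:ℝ) T, 0 ≤ u x)
    (c : ℝ) (hc : c ∈ Icc (0:ℝ) T) (huc : u c = 0) (hu'c0 : u' c = 0) :
    ∃ η > (0:ℝ), ∀ x ∈ Icc (0:ℝ) T ∩ Ioo (c - η) (c + η), u x = 0 ∧ u' x = 0 := by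
  -- total mass of M
  set A : ℝ := ∫ t in Icc (0:ℝ) T, M t with hA
  have hA0 : 0 ≤ A := setIntegral_nonneg measurableSet_Icc (fun x _ => hM0 x)
  -- continuity at c: get δ' with u < δ on a neighborhood
  obtain ⟨δ', hδ'pos, hδ'⟩ : ∃ d > (0:ℝ), ∀ x ∈ Icc (0:ℝ) T, dist x c < d → dist (u x) (u c) < δ := by
    have := (Metric.continuousWithinAt_iff).1 (hu c hc) δ hδ
    obtain ⟨d, hd, H⟩ := this
    exact ⟨d, hd, fun x hx hxd => H hx hxd⟩
  set η : ℝ := min (δ' / 2) (1 / (2 * (A + 1))) with hη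
  have hηpos : 0 < η := lt_min (by linarith) (by positivity)
  have hηδ' : η < δ' := lt_of_le_of_lt (min_le_left _ _) (by linarith)
  have hηA : η * A < 1 := by
    have h1 : η ≤ 1 / (2 * (A + 1)) := min_le_right _ _
    have h2 : η * A ≤ (1 / (2 * (A + 1))) * A := by
      apply mul_le_mul_of_nonneg_right h1 hA0
    have : (1 / (2 * (A + 1))) * A < 1 := by
      rw [div_mul_eq_mul_div, one_mul, div_lt_one (by positivity)]
      nlinarith
    linarith
  set a : ℝ := max 0 (c - η) with ha
  set b : ℝ := min T (c + η) with hb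
  have hac : a ≤ c := max_le hc.1 (by linarith)
  have hcb : c ≤ b := le_min hc.2 (by linarith)
  have hab : a ≤ b := hac.trans hcb
  have hsub : Icc a b ⊆ Icc 0 T := Icc_subset_Icc (le_max_left _ _) (min_le_left _ _)
  have hdist : ∀ x ∈ Icc a b, |x - c| ≤ η := by
    intro x hx
    rw [abs_sub_le_iff]
    constructor
    · have := hx.2; simp only [hb, le_min_iff] at this; linarith [this.2]
    · have := hx.1; simp only [ha, max_le_iff, le_max_iff] at this
      rcases le_max_iff.1 (le_refl a) with h | h
      · -- a = max 0 (c-η) ≥ c - η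
        have : c - η ≤ x := le_trans (le_max_right 0 (c - η)) hx.1
        linarith
      · have : c - η ≤ x := le_trans (le_max_right 0 (c - η)) hx.1
        linarith
  have huδ : ∀ x ∈ Icc a b, u x ≤ δ := by
    intro x hx
    have h1 : dist x c < δ' := by
      rw [Real.dist_eq]; exact lt_of_le_of_lt (hdist x hx) hηδ'
    have h2 := hδ' x (hsub hx) h1
    rw [huc, Real.dist_eq, sub_zero] at h2
    exact le_of_lt (lt_of_le_of_lt (le_abs_self _) h2)
  -- max of u on [a,b]
  obtain ⟨ξ, hξab, hξ⟩ : ∃ ξ ∈ Icc a b, ∀ x ∈ Icc a b, u x ≤ u ξ := by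
    have : (Icc a b).Nonempty := ⟨c, hac, hcb⟩
    obtain ⟨ξ, h1, h2⟩ := isCompact_Icc.exists_isMaxOn this (hu.mono hsub)
    exact ⟨ξ, h1, fun x hx => h2 hx⟩
  have hξ0 : 0 ≤ u ξ := hnn ξ (hsub hξab)
  -- interval integrability helpers
  have hIf : ∀ x ∈ Icc (0:ℝ) T, ∀ y ∈ Icc (0:ℝ) T, IntervalIntegrable f volume x y := by
    intro x hx y hy
    apply (hfint.mono_set _).intervalIntegrable
    exact uIcc_subset_Icc hx hy
  have hIMu : ∀ x ∈ Icc a b, IntervalIntegrable (fun t => M t * u t) volume c x := by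
    intro x hx
    apply (hMuint.mono_set _).intervalIntegrable
    exact (uIcc_subset_Icc hc (hsub hx))
  -- bound on |u'| on [a,b]
  have hu'bd : ∀ x ∈ Icc a b, |u' x| ≤ A * u ξ := by
    intro x hx
    have hxT := hsub hx
    have e1 : u' x = -(∫ t in c..x, f t) := by
      have h1 := heq x hxT
      have h2 := heq c hc
      have h3 : (∫ t in (0:ℝ)..x, f t) - (∫ t in (0:ℝ)..c, f t) = ∫ t in c..x, f t :=
        intervalIntegral.integral_interval_sub_left (hIf 0 (left_mem_Icc.2 (hc.1.trans hc.2)) x hxT)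
          (hIf 0 (left_mem_Icc.2 (hc.1.trans hc.2)) c hc)
      have := hu'c0
      rw [h2] at this
      -- u' x = u' 0 - ∫_0^x ; 0 = u' 0 - ∫_0^c
      rw [h1]; linarith [h3]
    have hIsub : Ι c x ⊆ Icc a b := fun t ht =>
      uIcc_subset_Icc ⟨hac, hcb⟩ hx (uIoc_subset_uIcc ht)
    have hIsub' : Ι c x ⊆ Icc (0:ℝ) T := fun t ht => hsub (hIsub ht)
    have hfI : IntegrableOn (fun t => ‖f t‖) (Ι c x) volume := (hfint.mono_set hIsub').norm
    have hMuI : IntegrableOn (fun t => M t * u t) (Ι c x) volume := hMuint.mono_set hIsub'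
    have hboundv : ∀ᵐ t ∂(volume : Measure ℝ), t ∈ Icc (0:ℝ) T →
        (0 ≤ u t → u t ≤ δ → |f t| ≤ M t * u t) :=
      (ae_restrict_iff' measurableSet_Icc).1 hbound
    rw [e1, abs_neg, ← Real.norm_eq_abs]
    calc ‖∫ t in c..x, f t‖ ≤ ∫ t in Ι c x, ‖f t‖ :=
          intervalIntegral.norm_integral_le_integral_norm_uIoc
      _ ≤ ∫ t in Ι c x, M t * u t := by
          apply setIntegral_mono_on_ae hfI hMuI measurableSet_uIoc
          filter_upwards [hboundv] with t ht htI
          have h1 := ht (hIsub' htI)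
          have h2 := hnn t (hIsub' htI)
          have h3 := huδ t (hIsub htI)
          simpa [Real.norm_eq_abs] using h1 h2 h3
      _ ≤ ∫ t in Icc a b, M t * u t := by
          apply setIntegral_mono_set (hMuint.mono_set hsub)
          · filter_upwards [ae_restrict_mem measurableSet_Icc] with t ht
            exact mul_nonneg (hM0 t) (hnn t (hsub ht))
          · exact HasSubset.Subset.eventuallyLE hIsub
      _ ≤ ∫ t in Icc a b, M t * u ξ := by
          apply setIntegral_mono_on (hMuint.mono_set hsub)
            ((hMint.mono_set hsub).mul_const _) measurableSet_Icc
          intro t ht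
          exact mul_le_mul_of_nonneg_left (hξ t ht) (hM0 t)
      _ = (∫ t in Icc a b, M t) * u ξ := by rw [integral_mul_const]
      _ ≤ A * u ξ := by
          apply mul_le_mul_of_nonneg_right _ hξ0
          apply setIntegral_mono_set hMint
          · filter_upwards with t using hM0 t
          · exact HasSubset.Subset.eventuallyLE hsub
  -- bound on u on [a,b]
  have hubd : ∀ x ∈ Icc a b, u x ≤ η * (A * u ξ) := by
    intro x hx
    have hxT := hsub hx
    have hftc : (∫ t in c..x, u' t) = u x - u c := by
      apply intervalIntegral.integral_eq_sub_of_hasDeriv_right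
      · exact hu.mono ((uIcc_subset_Icc hc hxT))
      · intro t ht
        have htT : t ∈ Ioo (0:ℝ) T := by
          constructor
          · exact lt_of_le_of_lt (le_min hc.1 hxT.1 : (0:ℝ) ≤ min c x) ht.1
          · exact lt_of_lt_of_le ht.2 (max_le hc.2 hxT.2)
        exact (hderiv t htT).hasDerivWithinAt
      · exact (((hu'cont.mono (uIcc_subset_Icc hc hxT))).integrableOn_compact
          isCompact_uIcc).intervalIntegrable
    have hbnd : ‖∫ t in c..x, u' t‖ ≤ (A * u ξ) * |x - c| := by
      apply intervalIntegral.norm_integral_le_of_norm_le_const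
      intro t ht
      have : t ∈ Icc a b := by
        have h1 : Ι c x ⊆ uIcc c x := Ioc_subset_Icc_self
        have h2 : uIcc c x ⊆ Icc a b := uIcc_subset_Icc ⟨hac, hcb⟩ hx
        exact h2 (h1 ht)
      exact hu'bd t this
    rw [hftc, huc, sub_zero] at hbnd
    calc u x ≤ |u x| := le_abs_self _
      _ ≤ (A * u ξ) * |x - c| := hbnd
      _ ≤ (A * u ξ) * η := by
          apply mul_le_mul_of_nonneg_left (hdist x hx) (mul_nonneg hA0 hξ0)
      _ = η * (A * u ξ) := mul_comm _ _
  -- conclude u ξ = 0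
  have hKz : u ξ = 0 := by
    have h1 : u ξ ≤ η * (A * u ξ) := hubd ξ hξab
    nlinarith [hηA, hξ0, mul_nonneg hA0 hξ0]
  refine ⟨η, hηpos, fun x hx => ?_⟩
  have hxab : x ∈ Icc a b := by
    obtain ⟨hx1, hx2⟩ := hx
    exact ⟨max_le hx1.1 hx2.1.le, le_min hx1.2 hx2.2.le⟩
  constructor
  · have h1 := hnn x (hsub hxab)
    have h2 := hξ x hxab
    linarith [hKz]
  · have := hu'bd x hxab
    rw [hKz, mul_zero] at this
    exact abs_eq_zero.1 (le_antisymm this (abs_nonneg _))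

lemma carath_aesm (T : ℝ) (hT : 0 ≤ T) (h : ℝ → ℝ → ℝ)
    (hmeas : ∀ s : ℝ, Measurable fun x => h x s)
    (hcont : ∀ᵐ x ∂(volume.restrict (Icc (0:ℝ) T)), Continuous fun s => h x s)
    (u : ℝ → ℝ) (hu : ContinuousOn u (Icc 0 T)) :
    AEStronglyMeasurable (fun t => h t (u t)) (volume.restrict (Icc (0:ℝ) T)) := by
  -- bad set where h x is not continuous, within Icc
  have hbad : (volume.restrict (Icc (0:ℝ) T)) {x | ¬ Continuous fun s => h x s} = 0 :=
    ae_iff.1 hcont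
  rw [Measure.restrict_apply' measurableSet_Icc] at hbad
  obtain ⟨N, hNsub, hNmeas, hNnull⟩ := exists_measurable_superset_of_null hbad
  -- modified h
  set B : Set ℝ := N ∪ (Icc (0:ℝ) T)ᶜ with hB
  have hBmeas : MeasurableSet B := hNmeas.union measurableSet_Icc.compl
  set h' : ℝ → ℝ → ℝ := fun x s => Set.indicator Bᶜ (fun y => h y s) x with hh'
  have h'cont : ∀ x, Continuous fun s => h' x s := by
    intro x
    by_cases hx : x ∈ B
    · have : ∀ s, h' x s = 0 := fun s => Set.indicator_of_notMem (by simpa using hx) _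
      simp only [this]; exact continuous_const
    · have heq : ∀ s, h' x s = h x s := fun s => Set.indicator_of_mem (by simpa using hx) _
      simp only [heq]
      have h1 : x ∈ {x | ¬ Continuous fun s => h x s} ∩ Icc (0:ℝ) T → False := by
        intro hmem; exact hx (Or.inl (hNsub hmem))
      by_contra hc
      exact h1 ⟨hc, by
        by_contra hic
        exact hx (Or.inr hic)⟩
  have h'meas : ∀ s : ℝ, StronglyMeasurable fun x => h' x s := by
    intro s
    apply Measurable.stronglyMeasurable
    exact (hmeas s).indicator hBmeas.compl
  have hju : StronglyMeasurable (Function.uncurry fun s x => h' x s) :=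
    stronglyMeasurable_uncurry_of_continuous_of_stronglyMeasurable h'cont h'meas
  -- continuous extension of u
  set π : ℝ → ℝ := fun t => max 0 (min t T) with hπ
  have hπcont : Continuous π := continuous_const.max (continuous_id.min continuous_const)
  have hπmem : ∀ t, π t ∈ Icc (0:ℝ) T := fun t =>
    ⟨le_max_left _ _, max_le hT (min_le_right _ _)⟩
  set v : ℝ → ℝ := fun t => u (π t) with hv
  have hvcont : Continuous v := hu.comp_continuous hπcont hπmem
  have hf0 : StronglyMeasurable fun t => h' t (v t) := by
    have : (fun t => h' t (v t)) = (Function.uncurry fun s x => h' x s) ∘ fun t => (v t, t) := rfl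
    rw [this]
    exact hju.comp_measurable (hvcont.measurable.prodMk measurable_id)
  refine ⟨fun t => h' t (v t), hf0, ?_⟩
  have hNae : ∀ᵐ x ∂(volume.restrict (Icc (0:ℝ) T)), x ∉ N := by
    have : (volume.restrict (Icc (0:ℝ) T)) N = 0 :=
      le_antisymm (le_trans (Measure.restrict_le_self _) hNnull.le) (zero_le)
    exact ae_iff.2 (by simpa using this)
  filter_upwards [ae_restrict_mem measurableSet_Icc, hNae] with t ht htN
  have htB : t ∉ B := by
    intro hmem
    rcases hmem with hm | hm
    · exact htN hm
    · exact hm ht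
  have hπt : π t = t := by
    have h1 : min t T = t := min_eq_left ht.2
    simp [hπ, h1, max_eq_right ht.1]
  have : h' t (v t) = h t (v t) := Set.indicator_of_mem (by simpa using htB) _
  rw [this, hv]
  simp [hπt]

lemma slope_left (T : ℝ) (hT : 0 < T) (u : ℝ → ℝ) (d : ℝ)
    (hd : HasDerivWithinAt u d (Icc 0 T) 0)
    (hnn : ∀ x ∈ Icc (0:ℝ) T, 0 ≤ u x) (h0 : u 0 = 0) : 0 ≤ d := by
  rw [hasDerivWithinAt_iff_tendsto_slope] at hd
  have hsub : Ioc (0:ℝ) T ⊆ Icc 0 T \ {0} :=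
    fun x hx => ⟨⟨hx.1.le, hx.2⟩, ne_of_gt hx.1⟩
  have htd : Tendsto (slope u 0) (𝓝[Ioc (0:ℝ) T] 0) (𝓝 d) :=
    hd.mono_left (nhdsWithin_mono _ hsub)
  haveI : (𝓝[Ioc (0:ℝ) T] (0:ℝ)).NeBot := by
    rw [← mem_closure_iff_nhdsWithin_neBot, closure_Ioc hT.ne]
    exact left_mem_Icc.2 hT.le
  apply ge_of_tendsto htd
  filter_upwards [self_mem_nhdsWithin] with x hx
  rw [slope_def_field]
  rw [h0]
  apply div_nonneg
  · simpa using hnn x ⟨hx.1.le, hx.2⟩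
  · simpa using hx.1.le

lemma slope_right (T : ℝ) (hT : 0 < T) (u : ℝ → ℝ) (d : ℝ)
    (hd : HasDerivWithinAt u d (Icc 0 T) T)
    (hnn : ∀ x ∈ Icc (0:ℝ) T, 0 ≤ u x) (h0 : u T = 0) : d ≤ 0 := by
  rw [hasDerivWithinAt_iff_tendsto_slope] at hd
  have hsub : Ico (0:ℝ) T ⊆ Icc 0 T \ {T} :=
    fun x hx => ⟨⟨hx.1, hx.2.le⟩, ne_of_lt hx.2⟩
  have htd : Tendsto (slope u T) (𝓝[Ico (0:ℝ) T] T) (𝓝 d) :=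
    hd.mono_left (nhdsWithin_mono _ hsub)
  haveI : (𝓝[Ico (0:ℝ) T] T).NeBot := by
    rw [← mem_closure_iff_nhdsWithin_neBot, closure_Ico hT.ne]
    exact right_mem_Icc.2 hT.le
  apply le_of_tendsto htd
  filter_upwards [self_mem_nhdsWithin] with x hx
  rw [slope_def_field, h0]
  apply div_nonpos_of_nonneg_of_nonpos
  · simpa using hnn x ⟨hx.1, hx.2.le⟩
  · linarith [hx.2]

theorem statement_18'
    (T : ℝ) (hT : 0 < T)
    (h : ℝ → ℝ → ℝ)
    (hmeas : ∀ s : ℝ, Measurable fun x => h x s)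
    (hacont : ∀ᵐ x ∂(volume.restrict (Icc (0:ℝ) T)), Continuous fun s => h x s)
    (hdom : ∀ ρ : ℝ, 0 < ρ → ∃ γ : ℝ → ℝ, (∀ x, 0 ≤ γ x) ∧
      IntegrableOn γ (Icc (0:ℝ) T) volume ∧
      ∀ᵐ x ∂(volume.restrict (Icc (0:ℝ) T)), ∀ s : ℝ, |s| ≤ ρ → |h x s| ≤ γ x)
    (h0 : ∀ᵐ x ∂(volume.restrict (Icc (0:ℝ) T)), h x 0 = 0)
    (q : ℝ → ℝ) (hq0 : ∀ x, 0 ≤ q x)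
    (hqint : IntegrableOn q (Icc (0:ℝ) T) volume)
    (hlim : ∀ ε : ℝ, 0 < ε → ∃ δ > (0:ℝ),
      ∀ᵐ x ∂(volume.restrict (Icc (0:ℝ) T)), ∀ s : ℝ, 0 < s → s ≤ δ →
        |h x s| ≤ (q x + ε) * s)
    (u u' : ℝ → ℝ)
    (hD : ∀ x ∈ Icc (0:ℝ) T, HasDerivWithinAt u (u' x) (Icc (0:ℝ) T) x)
    (hu'cont : ContinuousOn u' (Icc (0:ℝ) T))
    (heq : ∀ x ∈ Icc (0:ℝ) T, u' x = u' 0 - ∫ t in (0:ℝ)..x, h t (u t))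
    (hBC : (u' 0 = 0 ∧ u' T = 0) ∨ (u 0 = u T ∧ u' 0 = u' T))
    (hnn : ∀ x ∈ Icc (0:ℝ) T, 0 ≤ u x)
    (hne : ¬ (∀ x ∈ Icc (0:ℝ) T, u x = 0)) :
    ∀ x ∈ Icc (0:ℝ) T, 0 < u x := by
  have hu : ContinuousOn u (Icc (0:ℝ) T) := fun x hx => (hD x hx).continuousWithinAt
  have hderiv : ∀ x ∈ Ioo (0:ℝ) T, HasDerivAt u (u' x) x := fun x hx =>
    (hD x ⟨hx.1.le, hx.2.le⟩).hasDerivAt (Icc_mem_nhds hx.1 hx.2)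
  -- global bound on u
  obtain ⟨C, hC⟩ := isCompact_Icc.exists_bound_of_continuousOn hu
  have hC0 : 0 ≤ C := le_trans (norm_nonneg _) (hC 0 (left_mem_Icc.2 hT.le))
  set ρ : ℝ := C + 1 with hρdef
  have hρ : 0 < ρ := by linarith
  obtain ⟨γ, hγ0, hγint, hγbd⟩ := hdom ρ hρ
  set f : ℝ → ℝ := fun t => h t (u t) with hf
  have hfm : AEStronglyMeasurable f (volume.restrict (Icc (0:ℝ) T)) :=
    carath_aesm T hT.le h hmeas hacont u hu
  have hfint : IntegrableOn f (Icc (0:ℝ) T) volume := by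
    apply Integrable.mono' hγint hfm
    filter_upwards [hγbd, ae_restrict_mem measurableSet_Icc] with t hγt ht
    have : |u t| ≤ ρ := by
      have := hC t ht; rw [Real.norm_eq_abs] at this; linarith
    simpa [Real.norm_eq_abs] using hγt (u t) this
  obtain ⟨δ, hδpos, hδbd⟩ := hlim 1 one_pos
  set M : ℝ → ℝ := fun t => q t + 1 with hM
  have hM0 : ∀ x, 0 ≤ M x := fun x => by have := hq0 x; simp only [hM]; linarith
  have hMint : IntegrableOn M (Icc (0:ℝ) T) volume := by
    apply hqint.add
    simp [integrableOn_const, measure_Icc_lt_top]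
  -- continuous bounded extension of u
  set π : ℝ → ℝ := fun t => max 0 (min t T) with hπ
  have hπcont : Continuous π := continuous_const.max (continuous_id.min continuous_const)
  have hπmem : ∀ t, π t ∈ Icc (0:ℝ) T := fun t =>
    ⟨le_max_left _ _, max_le hT.le (min_le_right _ _)⟩
  set v : ℝ → ℝ := fun t => u (π t) with hv
  have hvcont : Continuous v := hu.comp_continuous hπcont hπmem
  have hveq : ∀ᵐ t ∂(volume.restrict (Icc (0:ℝ) T)), v t = u t := by
    filter_upwards [ae_restrict_mem measurableSet_Icc] with t ht
    have h1 : min t T = t := min_eq_left ht.2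
    simp [hv, hπ, h1, max_eq_right ht.1]
  have hMuint : IntegrableOn (fun t => M t * u t) (Icc (0:ℝ) T) volume := by
    have h1 : IntegrableOn (fun t => v t * M t) (Icc (0:ℝ) T) volume := by
      apply Integrable.bdd_mul hMint hvcont.aestronglyMeasurable
      exact ae_of_all _ (fun x => hC (π x) (hπmem x))
    apply h1.congr
    filter_upwards [hveq] with t ht
    rw [ht, mul_comm]
  have hbound : ∀ᵐ t ∂(volume.restrict (Icc (0:ℝ) T)),
      0 ≤ u t → u t ≤ δ → |f t| ≤ M t * u t := by
    filter_upwards [h0, hδbd] with t ht0 htδ h1 h2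
    rcases eq_or_lt_of_le h1 with h3 | h3
    · simp only [hf, ← h3, ht0, abs_zero, mul_zero, le_refl]
    · exact htδ (u t) h3 h2
  -- find a zero of both u and u'
  by_contra hcon
  push_neg at hcon
  obtain ⟨x₀, hx₀I, hx₀⟩ := hcon
  have hu0 : u x₀ = 0 := le_antisymm hx₀ (hnn x₀ hx₀I)
  have hz : ∃ z ∈ Icc (0:ℝ) T, u z = 0 ∧ u' z = 0 := by
    by_cases hin : x₀ ∈ Ioo (0:ℝ) T
    · refine ⟨x₀, hx₀I, hu0, ?_⟩
      have hloc : IsLocalMin u x₀ := by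
        filter_upwards [Icc_mem_nhds hin.1 hin.2] with y hy
        rw [hu0]; exact hnn y hy
      exact hloc.hasDerivAt_eq_zero (hderiv x₀ hin)
    · have hends : u 0 = 0 ∨ u T = 0 := by
        rcases eq_or_lt_of_le hx₀I.1 with h1 | h1
        · left; rw [← h1] at hu0; exact hu0
        · rcases eq_or_lt_of_le hx₀I.2 with h2 | h2
          · right; rw [h2] at hu0; exact hu0
          · exact absurd ⟨h1, h2⟩ hin
      rcases hBC with ⟨hN0, hNT⟩ | ⟨hP, hP'⟩
      · rcases hends with h1 | h1
        · exact ⟨0, left_mem_Icc.2 hT.le, h1, hN0⟩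
        · exact ⟨T, right_mem_Icc.2 hT.le, h1, hNT⟩
      · have hu00 : u 0 = 0 ∧ u T = 0 := by
          rcases hends with h1 | h1
          · exact ⟨h1, by rw [← hP]; exact h1⟩
          · exact ⟨by rw [hP]; exact h1, h1⟩
        have h1 : 0 ≤ u' 0 := slope_left T hT u (u' 0)
          (hD 0 (left_mem_Icc.2 hT.le)) hnn hu00.1
        have h2 : u' T ≤ 0 := slope_right T hT u (u' T)
          (hD T (right_mem_Icc.2 hT.le)) hnn hu00.2
        have h3 : u' 0 = 0 := le_antisymm (by rw [hP']; exact h2) h1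
        exact ⟨0, left_mem_Icc.2 hT.le, hu00.1, h3⟩
  obtain ⟨z, hzI, hz0, hz'0⟩ := hz
  -- clopen argument
  haveI : PreconnectedSpace (Icc (0:ℝ) T) := Subtype.preconnectedSpace isPreconnected_Icc
  set S : Set (Icc (0:ℝ) T) := {x | u ↑x = 0 ∧ u' ↑x = 0} with hS
  have hSc : IsClosed S := by
    have h1 : Continuous fun x : Icc (0:ℝ) T => u ↑x := hu.restrict
    have h2 : Continuous fun x : Icc (0:ℝ) T => u' ↑x := hu'cont.restrict
    exact ((isClosed_singleton.preimage h1).inter (isClosed_singleton.preimage h2))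
  have hSo : IsOpen S := by
    rw [isOpen_iff_mem_nhds]
    rintro c ⟨hc1, hc2⟩
    obtain ⟨η, hη, hloc⟩ := local_zero T u u' f M δ hδpos hu hderiv heq hu'cont hfint
      hM0 hMint hMuint hbound hnn ↑c c.2 hc1 hc2
    have h1 : Ioo ((c:ℝ) - η) ((c:ℝ) + η) ∈ 𝓝 (c:ℝ) :=
      Ioo_mem_nhds (by linarith) (by linarith)
    have h2 := continuous_subtype_val.continuousAt.preimage_mem_nhds h1
    filter_upwards [h2] with x hx
    exact hloc ↑x ⟨x.2, hx⟩
  have hSuniv : S = univ := IsClopen.eq_univ ⟨hSc, hSo⟩ ⟨⟨z, hzI⟩, hz0, hz'0⟩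
  apply hne
  intro x hx
  have : (⟨x, hx⟩ : Icc (0:ℝ) T) ∈ S := hSuniv.symm ▸ mem_univ _
  exact this.1


/-- Maximum principle (ii): if `h` is `L¹`-Carathéodory with `h(x,0) = 0` a.e.
and `limsup_{s→0⁺} |h(x,s)|/s ≤ q(x)` uniformly a.e. for some non-negative
`q ∈ L¹([0,T])`, then every non-negative, not identically zero, Neumann or
periodic solution of `u'' + h(x,u) = 0` is strictly positive on `[0,T]`. -/
theorem statement_18
    (T : ℝ) (hT : 0 < T)
    (h : ℝ → ℝ → ℝ) (hCar : L1Caratheodory T h)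
    (h0 : ∀ᵐ x ∂(volume.restrict (Icc (0:ℝ) T)), h x 0 = 0)
    (q : ℝ → ℝ) (hq0 : ∀ x, 0 ≤ q x)
    (hqint : IntegrableOn q (Icc (0:ℝ) T) volume)
    (hlim : ∀ ε : ℝ, 0 < ε → ∃ δ > (0:ℝ),
      ∀ᵐ x ∂(volume.restrict (Icc (0:ℝ) T)), ∀ s : ℝ, 0 < s → s ≤ δ →
        |h x s| ≤ (q x + ε) * s)
    (u u' : ℝ → ℝ)
    (hsol : IsSolOn T (fun t => h t (u t)) u u')
    (hBC : (u' 0 = 0 ∧ u' T = 0) ∨ (u 0 = u T ∧ u' 0 = u' T))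
    (hnn : ∀ x ∈ Icc (0:ℝ) T, 0 ≤ u x)
    (hne : ¬ (∀ x ∈ Icc (0:ℝ) T, u x = 0)) :
    ∀ x ∈ Icc (0:ℝ) T, 0 < u x := by
  obtain ⟨hD, hu'cont, heq⟩ := hsol
  exact statement_18' T hT h hCar.1 hCar.2.1 hCar.2.2 h0 q hq0 hqint hlim u u'
    hD hu'cont heq hBC hnn hne
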